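/- A symmetric m×m real matrix A with nonnegative entries satisfies: there exists a substochastic matrix X with A = (X + Xᵀ)/2, if and only if A ∈ 𝐔_m, i.e., for every subset α ⊆ {1,…,m} we have ∑_{i,j∈α} a_{ij} ≤ |α|. -/

import Mathlib

open Matrix Finset

def IsInU {m : ℕ} (A : Matrix (Fin m) (Fin m) ℝ) : Prop :=
  A.IsSymm ∧ (∀ i j, 0 ≤ A i j) ∧
    ∀ α : Finset (Fin m), ∑ i ∈ α, ∑ j ∈ α, A i j ≤ (α.card : ℝ)

def IsInUtop {m : ℕ} (A : Matrix (Fin m) (Fin m) ℝ) : Prop :=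
  IsInU A ∧ ∑ i, ∑ j, A i j = (m : ℝ)

def IsExtremeIn {m : ℕ} (S : Matrix (Fin m) (Fin m) ℝ → Prop)
    (A : Matrix (Fin m) (Fin m) ℝ) : Prop :=
  S A ∧ ∀ A₁ A₂, S A₁ → S A₂ → A₁ + A₂ = (2 : ℝ) • A → A₁ = A ∧ A₂ = A

def IsRowStochastic {m : ℕ} (X : Matrix (Fin m) (Fin m) ℝ) : Prop :=
  (∀ i j, 0 ≤ X i j) ∧ ∀ i, ∑ j, X i j = 1

def IsSubstochastic {m : ℕ} (X : Matrix (Fin m) (Fin m) ℝ) : Prop :=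
  (∀ i j, 0 ≤ X i j) ∧ ∀ i, ∑ j, X i j ≤ 1

namespace Stmt1Aux

variable {m : ℕ}

def Feas (A : Matrix (Fin m) (Fin m) ℝ) (f : Fin m → Fin m → ℝ) : Prop :=
  (∀ u v, f u v = - f v u) ∧ (∀ u v, f u v ≤ A u v)

lemma skew_double_sum (S : Finset (Fin m)) (f : Fin m → Fin m → ℝ)
    (hf : ∀ u v, f u v = - f v u) : ∑ u ∈ S, ∑ v ∈ S, f u v = 0 := by
  have h1 : ∑ u ∈ S, ∑ v ∈ S, f u v = ∑ u ∈ S, ∑ v ∈ S, f v u := Finset.sum_comm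
  have h2 : ∑ u ∈ S, ∑ v ∈ S, f v u = - ∑ u ∈ S, ∑ v ∈ S, f u v := by
    rw [← Finset.sum_neg_distrib]
    refine Finset.sum_congr rfl fun u _ => ?_
    rw [← Finset.sum_neg_distrib]
    exact Finset.sum_congr rfl fun v _ => hf v u
  linarith [h1, h2]

lemma ite_and_comm (p q : Prop) [Decidable p] [Decidable q] [Decidable (p ∧ q)]
    [Decidable (q ∧ p)] (x y : ℝ) :
    (if p ∧ q then x else y) = if q ∧ p then x else y := by
  by_cases h : p ∧ q
  · rw [if_pos h, if_pos ⟨h.2, h.1⟩]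
  · rw [if_neg h, if_neg (fun hh => h ⟨hh.2, hh.1⟩)]

/-- Augmentation along a residual path. -/
lemma aug (A : Matrix (Fin m) (Fin m) ℝ) {f : Fin m → Fin m → ℝ} (hf : Feas A f)
    {i j : Fin m} (hij : Relation.ReflTransGen (fun u v => f u v < A u v) i j) :
    ∃ ε₀ c : ℝ, 0 < ε₀ ∧ 0 ≤ c ∧ ∀ ε : ℝ, 0 < ε → ε ≤ ε₀ →
      ∃ f' : Fin m → Fin m → ℝ, Feas A f' ∧
        (∀ u, ∑ v, f' u v =
          ∑ v, f u v + ε * ((if u = i then 1 else 0) - (if u = j then 1 else 0))) ∧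
        (∀ u v, f' u v ≤ f u v + c * ε) := by
  induction hij with
  | refl =>
    exact ⟨1, 0, one_pos, le_refl 0, fun ε hε hε' => ⟨f, hf, by simp, by simp⟩⟩
  | @tail k j hik hkj ih =>
    obtain ⟨ε₀, c, hε₀, hc, H⟩ := ih
    have hpos : 0 < (A k j - f k j) / (c + 1) := by
      apply div_pos (by linarith [hkj]) (by linarith)
    refine ⟨min ε₀ ((A k j - f k j) / (c + 1)), c + 1, lt_min hε₀ hpos, by linarith, ?_⟩
    intro ε hε hεle
    obtain ⟨f₁, hf₁, hnet₁, hb₁⟩ := H ε hε (le_trans hεle (min_le_left _ _))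
    have hεkj : (c + 1) * ε ≤ A k j - f k j := by
      have h := le_trans hεle (min_le_right _ _)
      rw [le_div_iff₀ (by linarith)] at h
      linarith [h]
    have hcε : (c + 1) * ε = c * ε + ε := by ring
    refine ⟨fun u v => f₁ u v + (if u = k ∧ v = j then ε else 0)
        - (if u = j ∧ v = k then ε else 0), ⟨?_, ?_⟩, ?_, ?_⟩
    · intro u v
      show f₁ u v + (if u = k ∧ v = j then ε else 0) - (if u = j ∧ v = k then ε else 0)
        = -(f₁ v u + (if v = k ∧ u = j then ε else 0) - (if v = j ∧ u = k then ε else 0))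
      rw [ite_and_comm (v = k) (u = j), ite_and_comm (v = j) (u = k), hf₁.1 u v]
      ring
    · intro u v
      show f₁ u v + (if u = k ∧ v = j then ε else 0) - (if u = j ∧ v = k then ε else 0)
        ≤ A u v
      by_cases h1 : u = k ∧ v = j
      · by_cases h2 : u = j ∧ v = k
        · rw [if_pos h1, if_pos h2]
          have := hf₁.2 u v
          linarith
        · rw [if_pos h1, if_neg h2]
          obtain ⟨rfl, rfl⟩ := h1
          have := hb₁ u v
          linarith [hεkj, hcε]
      · rw [if_neg h1]
        by_cases h2 : u = j ∧ v = k
        · rw [if_pos h2]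
          have := hf₁.2 u v
          linarith
        · rw [if_neg h2]
          have := hf₁.2 u v
          linarith
    · intro u
      show (∑ v, (f₁ u v + (if u = k ∧ v = j then ε else 0)
          - (if u = j ∧ v = k then ε else 0)))
        = ∑ v, f u v + ε * ((if u = i then 1 else 0) - (if u = j then 1 else 0))
      rw [Finset.sum_sub_distrib, Finset.sum_add_distrib]
      have e1 : ∑ v, (if u = k ∧ v = j then ε else 0) = if u = k then ε else 0 := by
        by_cases h : u = k <;> simp [h]
      have e2 : ∑ v, (if u = j ∧ v = k then ε else 0) = if u = j then ε else 0 := by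
        by_cases h : u = j <;> simp [h]
      have ek : (if u = k then ε else 0) = ε * (if u = k then 1 else 0) := by
        split <;> ring
      have ej : (if u = j then ε else 0) = ε * (if u = j then 1 else 0) := by
        split <;> ring
      rw [e1, e2, hnet₁ u, ek, ej]
      ring
    · intro u v
      show f₁ u v + (if u = k ∧ v = j then ε else 0) - (if u = j ∧ v = k then ε else 0)
        ≤ f u v + (c + 1) * ε
      have hb := hb₁ u v
      by_cases h1 : u = k ∧ v = j
      · rw [if_pos h1]
        by_cases h2 : u = j ∧ v = k
        · rw [if_pos h2]; linarith [mul_nonneg hc hε.le, hε]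
        · rw [if_neg h2]; linarith [hcε]
      · rw [if_neg h1]
        by_cases h2 : u = j ∧ v = k
        · rw [if_pos h2]; linarith [hε, mul_nonneg hc hε.le]
        · rw [if_neg h2]; linarith [mul_nonneg hc hε.le, hε]

end Stmt1Aux

theorem stmt_1 {m : ℕ} (A : Matrix (Fin m) (Fin m) ℝ)
    (hsymm : A.IsSymm) (hnn : ∀ i j, 0 ≤ A i j) :
    (∃ X : Matrix (Fin m) (Fin m) ℝ, IsSubstochastic X ∧ A = (1/2 : ℝ) • (X + Xᵀ)) ↔
      IsInU A := by
  classical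
  have hsymm' : ∀ u v, A v u = A u v := fun u v => hsymm.apply u v
  constructor
  · rintro ⟨X, ⟨hXnn, hXrow⟩, hAX⟩
    refine ⟨hsymm, hnn, fun α => ?_⟩
    have hA : ∀ i j, A i j = (1/2 : ℝ) * (X i j + X j i) := by
      intro i j
      rw [hAX]
      simp [Matrix.smul_apply, Matrix.add_apply, Matrix.transpose_apply]
    have key : ∑ i ∈ α, ∑ j ∈ α, A i j = ∑ i ∈ α, ∑ j ∈ α, X i j := by
      have hc : (∑ i ∈ α, ∑ j ∈ α, X j i) = ∑ i ∈ α, ∑ j ∈ α, X i j := Finset.sum_comm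
      calc ∑ i ∈ α, ∑ j ∈ α, A i j
          = ∑ i ∈ α, ∑ j ∈ α, ((1/2 : ℝ) * (X i j + X j i)) :=
            Finset.sum_congr rfl fun i _ => Finset.sum_congr rfl fun j _ => hA i j
        _ = ∑ i ∈ α, ∑ j ∈ α, X i j := by
            simp only [← Finset.mul_sum, Finset.sum_add_distrib]
            rw [hc]; ring
    rw [key]
    calc ∑ i ∈ α, ∑ j ∈ α, X i j
        ≤ ∑ i ∈ α, ∑ j, X i j :=
          Finset.sum_le_sum fun i _ =>
            Finset.sum_le_sum_of_subset_of_nonneg (Finset.subset_univ α)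
              (fun j _ _ => hXnn i j)
      _ ≤ ∑ _i ∈ α, (1 : ℝ) := Finset.sum_le_sum fun i _ => hXrow i
      _ = (α.card : ℝ) := by simp
  · rintro ⟨-, -, hUcond⟩
    -- continuity helper
    have cont : ∀ u v : Fin m, Continuous fun f : Fin m → Fin m → ℝ => f u v :=
      fun u v => (continuous_apply v).comp (continuous_apply u)
    set F : Set (Fin m → Fin m → ℝ) := {f | Stmt1Aux.Feas A f} with hFdef
    have hF0 : (0 : Fin m → Fin m → ℝ) ∈ F :=
      ⟨fun u v => by simp, fun u v => by simpa using hnn u v⟩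
    have hFc : IsCompact F := by
      have hcomp : IsCompact (Set.univ.pi fun u : Fin m =>
          Set.univ.pi fun v : Fin m => Set.Icc (-(A v u)) (A u v)) :=
        isCompact_univ_pi fun u => isCompact_univ_pi fun v => isCompact_Icc
      have hclosed : IsClosed F := by
        have hEq : F = ⋂ u, ⋂ v,
            ({f : Fin m → Fin m → ℝ | f u v = - f v u} ∩ {f | f u v ≤ A u v}) := by
          ext f
          simp only [hFdef, Set.mem_setOf_eq, Set.mem_iInter, Set.mem_inter_iff,
            Stmt1Aux.Feas]
          constructor
          · rintro ⟨h1, h2⟩ u v; exact ⟨h1 u v, h2 u v⟩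
          · intro h; exact ⟨fun u v => (h u v).1, fun u v => (h u v).2⟩
        rw [hEq]
        exact isClosed_iInter fun u => isClosed_iInter fun v =>
          (isClosed_eq (cont u v) (cont v u).neg).inter
            (isClosed_le (cont u v) continuous_const)
      refine hcomp.of_isClosed_subset hclosed ?_
      intro f hf
      rw [Set.mem_univ_pi]
      intro u
      rw [Set.mem_univ_pi]
      intro v
      refine ⟨?_, hf.2 u v⟩
      have := hf.2 v u
      have hsk := hf.1 u v
      linarith
    set Φ : (Fin m → Fin m → ℝ) → ℝ :=
      fun f => ∑ u, min (∑ v, f u v - ((∑ w, A u w) - 1)) 0 with hΦdef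
    have hΦc : Continuous Φ := by
      apply continuous_finset_sum
      intro u _
      exact ((continuous_finset_sum _ fun v _ => cont u v).sub continuous_const).min
        continuous_const
    obtain ⟨g, hgF, hgmax⟩ := hFc.exists_isMaxOn ⟨0, hF0⟩ hΦc.continuousOn
    have hgskew := hgF.1
    have hgle := hgF.2
    -- main claim: row "outflow" is at least the deficiency everywhere
    have hfeas : ∀ u, (∑ w, A u w) - 1 ≤ ∑ v, g u v := by
      by_contra hcon
      push_neg at hcon
      obtain ⟨i, hi⟩ := hcon
      set Rel : Fin m → Fin m → Prop := fun u v => g u v < A u v with hReldef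
      set S : Finset (Fin m) := Finset.univ.filter (fun u => Relation.ReflTransGen Rel i u)
        with hSdef
      have hiS : i ∈ S := by
        simp only [hSdef, Finset.mem_filter, Finset.mem_univ, true_and]
        exact Relation.ReflTransGen.refl
      have hsat : ∀ u ∈ S, ∀ v, v ∉ S → g u v = A u v := by
        intro u hu v hv
        by_contra hne
        have hlt : Rel u v := lt_of_le_of_ne (hgle u v) hne
        apply hv
        simp only [hSdef, Finset.mem_filter, Finset.mem_univ, true_and] at hu ⊢
        exact hu.tail hlt
      have hjex : ∃ j ∈ S, (∑ w, A j w) - 1 < ∑ v, g j v := by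
        by_contra hcon2
        push_neg at hcon2
        -- splitting of sums
        have hsplitA : ∀ u, (∑ w, A u w) = ∑ v ∈ S, A u v + ∑ v ∈ Sᶜ, A u v :=
          fun u => (Finset.sum_add_sum_compl S _).symm
        have hsplitg : ∀ u, (∑ v, g u v) = ∑ v ∈ S, g u v + ∑ v ∈ Sᶜ, g u v :=
          fun u => (Finset.sum_add_sum_compl S _).symm
        have hzero : ∑ u ∈ S, ∑ v ∈ S, g u v = 0 := Stmt1Aux.skew_double_sum S g hgskew
        have houter : ∑ u ∈ S, ∑ v ∈ Sᶜ, g u v = ∑ u ∈ S, ∑ v ∈ Sᶜ, A u v :=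
          Finset.sum_congr rfl fun u hu => Finset.sum_congr rfl fun v hv =>
            hsat u hu v (by simpa using hv)
        have hstrict : ∑ u ∈ S, (∑ v, g u v) < ∑ u ∈ S, ((∑ w, A u w) - 1) :=
          Finset.sum_lt_sum (fun u hu => hcon2 u hu) ⟨i, hiS, hi⟩
        have hcut : ∑ u ∈ S, ∑ v ∈ S, A u v ≤ (S.card : ℝ) := hUcond S
        have e1 : ∑ u ∈ S, (∑ v, g u v)
            = ∑ u ∈ S, ∑ v ∈ Sᶜ, A u v := by
          calc ∑ u ∈ S, (∑ v, g u v)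
              = ∑ u ∈ S, (∑ v ∈ S, g u v + ∑ v ∈ Sᶜ, g u v) :=
                Finset.sum_congr rfl fun u _ => hsplitg u
            _ = ∑ u ∈ S, ∑ v ∈ S, g u v + ∑ u ∈ S, ∑ v ∈ Sᶜ, g u v :=
                Finset.sum_add_distrib
            _ = ∑ u ∈ S, ∑ v ∈ Sᶜ, A u v := by rw [hzero, houter]; ring
        have e2 : ∑ u ∈ S, ((∑ w, A u w) - 1)
            = ∑ u ∈ S, ∑ v ∈ S, A u v + ∑ u ∈ S, ∑ v ∈ Sᶜ, A u v - (S.card : ℝ) := by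
          have eS : ∑ u ∈ S, (∑ w, A u w)
              = ∑ u ∈ S, ∑ v ∈ S, A u v + ∑ u ∈ S, ∑ v ∈ Sᶜ, A u v := by
            rw [← Finset.sum_add_distrib]
            exact Finset.sum_congr rfl fun u _ => hsplitA u
          have eone : ∑ _u ∈ S, (1 : ℝ) = (S.card : ℝ) := by simp
          rw [Finset.sum_sub_distrib, eS, eone]
        rw [e1, e2] at hstrict
        linarith
      obtain ⟨j, hjS, hjsur⟩ := hjex
      have hpath : Relation.ReflTransGen Rel i j := by
        simpa only [hSdef, Finset.mem_filter, Finset.mem_univ, true_and] using hjS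
      obtain ⟨ε₀, c, hε₀, hc, H⟩ := Stmt1Aux.aug A hgF hpath
      set ε := min ε₀ (min (((∑ w, A i w) - 1) - ∑ v, g i v)
        ((∑ v, g j v) - ((∑ w, A j w) - 1))) with hεdef
      have hεpos : 0 < ε := lt_min hε₀ (lt_min (by linarith) (by linarith))
      obtain ⟨f', hf'F, hnet', -⟩ := H ε hεpos (min_le_left _ _)
      have hij : i ≠ j := by
        intro h; rw [h] at hi; linarith
      have hterm : ∀ u, min (∑ v, f' u v - ((∑ w, A u w) - 1)) 0
          = min (∑ v, g u v - ((∑ w, A u w) - 1)) 0 + (if u = i then ε else 0) := by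
        intro u
        rw [hnet' u]
        by_cases h1 : u = i
        · subst h1
          rw [if_pos rfl, if_pos rfl, if_neg (fun h => hij h)]
          have hεle : ε ≤ ((∑ w, A u w) - 1) - ∑ v, g u v :=
            le_trans (min_le_right _ _) (min_le_left _ _)
          rw [min_eq_left (by linarith), min_eq_left (by linarith)]
          ring
        · rw [if_neg h1, if_neg h1]
          by_cases h2 : u = j
          · subst h2
            rw [if_pos rfl]
            have hεle : ε ≤ (∑ v, g u v) - ((∑ w, A u w) - 1) :=
              le_trans (min_le_right _ _) (min_le_right _ _)
            rw [min_eq_right (by linarith), min_eq_right (by linarith)]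
            ring
          · rw [if_neg h2]
            ring_nf
      have hΦeq : Φ f' = Φ g + ε := by
        simp only [hΦdef]
        rw [Finset.sum_congr rfl fun u _ => hterm u, Finset.sum_add_distrib]
        have hsum : ∑ u : Fin m, (if u = i then ε else 0) = ε := by
          rw [Finset.sum_ite_eq' Finset.univ i fun _ => ε]
          simp
        rw [hsum]
      have hle : Φ f' ≤ Φ g := hgmax hf'F
      linarith
    -- construct the substochastic matrix
    refine ⟨Matrix.of (fun u v => A u v - g u v), ⟨?_, ?_⟩, ?_⟩
    · intro u v
      have := hgle u v
      simp only [Matrix.of_apply]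
      linarith
    · intro u
      have h1 : ∑ v, (A u v - g u v) = (∑ w, A u w) - ∑ v, g u v :=
        Finset.sum_sub_distrib _ _
      have h2 := hfeas u
      simp only [Matrix.of_apply]
      rw [h1]
      linarith
    · ext u v
      have h1 : A v u = A u v := hsymm' u v
      have h2 : g u v = - g v u := hgskew u v
      simp only [Matrix.smul_apply, Matrix.add_apply, Matrix.transpose_apply,
        Matrix.of_apply, smul_eq_mul]
      linarith
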